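/- A single-decision causal influence diagram admits an instrumental control incentive on a node X if and only if the graph contains a directed path from the decision D through X to some utility node. -/

import Mathlib

attribute [local instance] Classical.propDecidable

noncomputable section

/-- Acyclicity of a directed graph. -/
def Acyclic {V : Type} (E : V → V → Prop) : Prop := ∀ v, ¬ Relation.TransGen E v v

/-- A walk in the digraph: a nonempty list of vertices where consecutive
vertices are joined by an edge in some direction. -/
def IsWalk {V : Type} (E : V → V → Prop) (p : List V) : Prop :=
  p ≠ [] ∧ p.Chain' (fun a b => E a b ∨ E b a)

/-- A consecutive triple `a, b, c` blocks a path w.r.t. `S` if `b` is a collider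
with no descendant (including itself) in `S`, or a non-collider in `S`. -/
def BlockedTriple {V : Type} (E : V → V → Prop) (S : Set V) (a b c : V) : Prop :=
  (E a b ∧ E c b ∧ ∀ w, Relation.ReflTransGen E b w → w ∉ S) ∨
  (¬ (E a b ∧ E c b) ∧ b ∈ S)

/-- A path is d-separated (blocked) by `S`. -/
def BlocksPath {V : Type} (E : V → V → Prop) (S : Set V) (p : List V) : Prop :=
  (∃ x, p.head? = some x ∧ x ∈ S) ∨ (∃ x, p.getLast? = some x ∧ x ∈ S) ∨
  (∃ l a b c r, p = l ++ a :: b :: c :: r ∧ BlockedTriple E S a b c)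

/-- `A` is d-separated from `B` given `S`. -/
def DSep {V : Type} (E : V → V → Prop) (A B S : Set V) : Prop :=
  ∀ p : List V, IsWalk E p → (∃ a ∈ A, p.head? = some a) →
    (∃ b ∈ B, p.getLast? = some b) → BlocksPath E S p

/-- An observation `X ∈ Pa_D` is requisite in the graph `E` with decision `D` and
utility nodes `U` if it is d-connected to the downstream utilities `U ∩ Desc(D)`
given the other observations and the decision, `(Pa_D ∪ {D}) \ {X}`. -/
def RequisiteG {V : Type} (E : V → V → Prop) (D : V) (U : Set V) (X : V) : Prop :=
  E X D ∧ ¬ DSep E {X} {u | u ∈ U ∧ Relation.ReflTransGen E D u}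
      {v | (E v D ∧ v ≠ X) ∨ v = D}

/-- The edge relation of the minimal reduction: all information links from
nonrequisite observations are removed. -/
def ReducedEdge {V : Type} (E : V → V → Prop) (D : V) (U : Set V) : V → V → Prop :=
  fun a b => E a b ∧ (b = D → RequisiteG E D U a)

variable {V : Type} [Fintype V] [DecidableEq V]

/-- A single-decision structural causal influence model (SCIM): a causal
influence diagram (DAG with a decision node `D` and childless utility nodes
`Util` whose values are interpreted in `ℝ` via `utilReal`), finite nonempty
domains, structural functions for all non-decision nodes depending only on
parents, and mutually independent finitely-supported exogenous variables. -/
structure SCIM (V : Type) [Fintype V] [DecidableEq V] where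
  Edge : V → V → Prop
  acyclic : Acyclic Edge
  D : V
  Util : Finset V
  utilNotD : D ∉ Util
  utilNoChild : ∀ u ∈ Util, ∀ v, ¬ Edge u v
  Dom : V → Type
  domFin : ∀ v, Fintype (Dom v)
  domNE : ∀ v, Nonempty (Dom v)
  utilReal : (u : V) → Dom u → ℝ
  ExoDom : V → Type
  exoFin : ∀ v, Fintype (ExoDom v)
  exoNE : ∀ v, Nonempty (ExoDom v)
  f : (v : V) → ((p : V) → Dom p) → ExoDom v → Dom v
  localDep : ∀ v a a' e, (∀ p, Edge p v → a p = a' p) → f v a e = f v a' e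
  P : (v : V) → ExoDom v → ℝ
  Pnonneg : ∀ v e, 0 ≤ P v e
  Psum : ∀ v, ∑ e ∈ (exoFin v).elems, P v e = 1

namespace SCIM

variable (M : SCIM V)

/-- Joint (product) probability of an exogenous setting. -/
def Pjoint (ε : ∀ v, M.ExoDom v) : ℝ := ∏ v, M.P v (ε v)

/-- All exogenous settings. -/
def exoElems : Finset (∀ v, M.ExoDom v) :=
  letI := M.exoFin; Finset.univ

/-- A default assignment of values. -/
def dflt : ∀ v, M.Dom v := fun v => (M.domNE v).some

/-- `a` solves the system of structural equations `g` at exogenous setting `ε`. -/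
def Solves (g : (v : V) → ((p : V) → M.Dom p) → M.ExoDom v → M.Dom v)
    (ε : ∀ v, M.ExoDom v) (a : ∀ v, M.Dom v) : Prop :=
  ∀ v, a v = g v a (ε v)

/-- The (unique, by acyclicity) solution of the structural equations `g`
at `ε`: the values of all endogenous variables obtained by recursive
application of the structural functions. -/
def sol (g : (v : V) → ((p : V) → M.Dom p) → M.ExoDom v → M.Dom v)
    (ε : ∀ v, M.ExoDom v) : ∀ v, M.Dom v :=
  if h : ∃ a, M.Solves g ε a then h.choose else M.dflt

/-- Replace the structural function at node `X` by `gX` (a soft intervention). -/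
def replaceAt (g : (v : V) → ((p : V) → M.Dom p) → M.ExoDom v → M.Dom v) (X : V)
    (gX : ((p : V) → M.Dom p) → M.ExoDom X → M.Dom X) :
    (v : V) → ((p : V) → M.Dom p) → M.ExoDom v → M.Dom v :=
  fun v => if h : v = X then (by subst h; exact gX) else g v

/-- Hard intervention do(`X` = `x`): constant functions on `X`. -/
def doSet (g : (v : V) → ((p : V) → M.Dom p) → M.ExoDom v → M.Dom v)
    (X : Set V) (x : ∀ v, M.Dom v) :
    (v : V) → ((p : V) → M.Dom p) → M.ExoDom v → M.Dom v :=
  fun v => if v ∈ X then fun _ _ => x v else g v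

/-- A policy: a structural function for `D` that depends only on the
observations `Pa_D` (and the exogenous variable of `D`). -/
def IsPolicy (π : ((p : V) → M.Dom p) → M.ExoDom M.D → M.Dom M.D) : Prop :=
  ∀ a a' e, (∀ p, M.Edge p M.D → a p = a' p) → π a e = π a' e

/-- The policy-completed system of structural functions. -/
def gpol (π : ((p : V) → M.Dom p) → M.ExoDom M.D → M.Dom M.D) :
    (v : V) → ((p : V) → M.Dom p) → M.ExoDom v → M.Dom v :=
  M.replaceAt M.f M.D π

/-- Total utility of an assignment: the sum of the utility-node values. -/
def TotalU (a : ∀ v, M.Dom v) : ℝ := ∑ u ∈ M.Util, M.utilReal u (a u)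

/-- Expected total utility of a system of structural equations `g`. -/
def EUg (g : (v : V) → ((p : V) → M.Dom p) → M.ExoDom v → M.Dom v) : ℝ :=
  ∑ ε ∈ M.exoElems, M.Pjoint ε * M.TotalU (M.sol g ε)

/-- Expected total utility of a policy. -/
def EU (π : ((p : V) → M.Dom p) → M.ExoDom M.D → M.Dom M.D) : ℝ :=
  M.EUg (M.gpol π)

/-- An optimal policy maximizes expected total utility. -/
def IsOptimal (π : ((p : V) → M.Dom p) → M.ExoDom M.D → M.Dom M.D) : Prop :=
  M.IsPolicy π ∧ ∀ π', M.IsPolicy π' → M.EU π' ≤ M.EU π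

/-- Probability of an event over exogenous settings. -/
def PrEv (Ev : (∀ v, M.ExoDom v) → Prop) : ℝ :=
  ∑ ε ∈ M.exoElems, if Ev ε then M.Pjoint ε else 0

/-- Conditional expectation of `h` given the event `Ev`. -/
def condExp (h : (∀ v, M.ExoDom v) → ℝ) (Ev : (∀ v, M.ExoDom v) → Prop) : ℝ :=
  (∑ ε ∈ M.exoElems, if Ev ε then M.Pjoint ε * h ε else 0) / M.PrEv Ev

/-- Conditional probability of `h` given `Ev`. -/
def condProb (h Ev : (∀ v, M.ExoDom v) → Prop) : ℝ :=
  M.PrEv (fun ε => h ε ∧ Ev ε) / M.PrEv Ev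

/-- The event that the decision context (the observations `Pa_D`) takes the
values `pa`, under policy `π`. -/
def CtxEvent (π : ((p : V) → M.Dom p) → M.ExoDom M.D → M.Dom M.D)
    (pa : ∀ v, M.Dom v) (ε : ∀ v, M.ExoDom v) : Prop :=
  ∀ p, M.Edge p M.D → M.sol (M.gpol π) ε p = pa p

/-- The potential response under the hard intervention do(`X` = `x`),
in the policy-completed model: an assignment to all variables. -/
def response (π : ((p : V) → M.Dom p) → M.ExoDom M.D → M.Dom M.D)
    (X : V) (x : M.Dom X) (ε : ∀ v, M.ExoDom v) : ∀ v, M.Dom v :=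
  M.sol (M.doSet (M.gpol π) {X} (Function.update M.dflt X x)) ε

/-- The nested-counterfactual assignment realizing `U_{X_d}`: intervene on `X`
with the value `X_d(ε)` it would take under do(`D` = `d`). -/
def nestedSol (π : ((p : V) → M.Dom p) → M.ExoDom M.D → M.Dom M.D)
    (X : V) (d : M.Dom M.D) (ε : ∀ v, M.ExoDom v) : ∀ v, M.Dom v :=
  M.response π X (M.response π M.D d ε X) ε

/-- Instrumental control incentive on `X`: in some decision context `pa`
(of positive probability), every optimal policy has
`E[U_{X_d} | pa] ≠ E[U | pa]` for some `d`. -/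
def HasICI (X : V) : Prop :=
  ∃ pa : ∀ v, M.Dom v, ∀ π, M.IsOptimal π →
    0 < M.PrEv (M.CtxEvent π pa) ∧
    ∃ d : M.Dom M.D,
      M.condExp (fun ε => M.TotalU (M.nestedSol π X d ε)) (M.CtxEvent π pa) ≠
      M.condExp (fun ε => M.TotalU (M.sol (M.gpol π) ε)) (M.CtxEvent π pa)

/-- A policy that does not use the information link `X → D`. -/
def IsPolicyWithout (X : V)
    (π : ((p : V) → M.Dom p) → M.ExoDom M.D → M.Dom M.D) : Prop :=
  M.IsPolicy π ∧ ∀ a a' e, (∀ p, M.Edge p M.D → p ≠ X → a p = a' p) → π a e = π a' e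

/-- Counterfactual fairness of policy `π` w.r.t. sensitive attribute `A`:
`Pr(D_{a'} = d | pa_D, a) = Pr(D = d | pa_D, a)` for all `d`, contexts `pa_D`,
and attribute values `a, a'` with positive probability of the conditioning event. -/
def CFair (π : ((p : V) → M.Dom p) → M.ExoDom M.D → M.Dom M.D) (A : V) : Prop :=
  ∀ (d : M.Dom M.D) (pa : ∀ v, M.Dom v) (a a' : M.Dom A),
    0 < M.PrEv (fun ε => M.CtxEvent π pa ε ∧ M.sol (M.gpol π) ε A = a) →
    M.condProb (fun ε => M.response π A a' ε M.D = d)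
        (fun ε => M.CtxEvent π pa ε ∧ M.sol (M.gpol π) ε A = a) =
    M.condProb (fun ε => M.sol (M.gpol π) ε M.D = d)
        (fun ε => M.CtxEvent π pa ε ∧ M.sol (M.gpol π) ε A = a)

end SCIM

/- ===== Auxiliary development ===== -/

lemma acyclic_wf {V : Type} [Finite V] {E : V → V → Prop} (h : Acyclic E) :
    WellFounded (Relation.TransGen E) := by
  have h1 : IsIrrefl V (Relation.TransGen E) := ⟨h⟩
  have h2 : IsTrans V (Relation.TransGen E) := inferInstance
  exact Finite.wellFounded_of_trans_of_irrefl _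

namespace SCIM

variable {V : Type} [Fintype V] [DecidableEq V] (M : SCIM V)

/-- A system of structural functions depending only on parents. -/
def LocalG (g : (v : V) → ((p : V) → M.Dom p) → M.ExoDom v → M.Dom v) : Prop :=
  ∀ v a a' e, (∀ p, M.Edge p v → a p = a' p) → g v a e = g v a' e

variable {M}

lemma exists_solves {g} (hg : M.LocalG g) (ε : ∀ v, M.ExoDom v) :
    ∃ a, M.Solves g ε a := by
  have wf := acyclic_wf M.acyclic
  set a : ∀ v, M.Dom v := WellFounded.fix wf
    (fun v rec => g v (fun p => if h : Relation.TransGen M.Edge p v then rec p h else M.dflt p) (ε v))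
    with ha
  refine ⟨a, fun v => ?_⟩
  have h1 : a v = g v (fun p => if h : Relation.TransGen M.Edge p v then a p else M.dflt p) (ε v) := by
    rw [ha]; rw [WellFounded.fix_eq]
  rw [h1]
  exact hg v _ _ _ (fun p hp => by rw [dif_pos (Relation.TransGen.single hp)])

lemma solves_unique {g} (hg : M.LocalG g) {ε : ∀ v, M.ExoDom v} {a a'}
    (h : M.Solves g ε a) (h' : M.Solves g ε a') : a = a' := by
  have wf := acyclic_wf M.acyclic
  funext v
  induction v using WellFounded.induction wf with
  | _ v ih =>
    rw [h v, h' v]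
    exact hg v _ _ _ (fun p hp => ih p (Relation.TransGen.single hp))

lemma sol_solves {g} (hg : M.LocalG g) (ε : ∀ v, M.ExoDom v) :
    M.Solves g ε (M.sol g ε) := by
  have h := exists_solves hg ε
  rw [SCIM.sol, dif_pos h]
  exact h.choose_spec

lemma sol_eq {g} (hg : M.LocalG g) {ε a} (ha : M.Solves g ε a) : M.sol g ε = a :=
  solves_unique hg (sol_solves hg ε) ha

end SCIM

namespace SCIM
variable {V : Type} [Fintype V] [DecidableEq V] {M : SCIM V}

lemma sol_congr {g g'} (hg : M.LocalG g) (hg' : M.LocalG g') {X : V}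
    (hagree : ∀ v, ¬ Relation.ReflTransGen M.Edge X v → g v = g' v)
    (ε : ∀ v, M.ExoDom v) :
    ∀ v, ¬ Relation.ReflTransGen M.Edge X v → M.sol g ε v = M.sol g' ε v := by
  have wf := acyclic_wf M.acyclic
  intro v
  induction v using WellFounded.induction wf with
  | _ v ih =>
    intro hv
    rw [sol_solves hg ε v, sol_solves hg' ε v, hagree v hv]
    refine hg' v _ _ _ (fun p hp => ?_)
    refine ih p (Relation.TransGen.single hp) (fun hXp => hv ?_)
    exact hXp.tail hp

lemma localG_gpol {π} (hπ : M.IsPolicy π) : M.LocalG (M.gpol π) := by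
  intro v a a' e hpar
  unfold SCIM.gpol SCIM.replaceAt
  by_cases h : v = M.D
  · subst h
    simp only [dif_pos rfl]
    exact hπ a a' e hpar
  · simp only [dif_neg h]
    exact M.localDep v a a' e hpar

lemma localG_doSet {g} (hg : M.LocalG g) (S : Set V) (x : ∀ v, M.Dom v) :
    M.LocalG (M.doSet g S x) := by
  intro v a a' e hpar
  unfold SCIM.doSet
  by_cases h : v ∈ S
  · simp [h]
  · simp only [if_neg h]
    exact hg v a a' e hpar

lemma doSet_self {g} (hg : M.LocalG g) (X : V) (ε : ∀ v, M.ExoDom v) :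
    M.sol (M.doSet g {X} (Function.update M.dflt X (M.sol g ε X))) ε = M.sol g ε := by
  refine sol_eq (localG_doSet hg _ _) (fun v => ?_)
  unfold SCIM.doSet
  by_cases h : v ∈ ({X} : Set V)
  · rw [if_pos h]
    rcases h with rfl
    simp
  · rw [if_neg h]
    exact sol_solves hg ε v

lemma exists_optimal (M : SCIM V) : ∃ π, M.IsOptimal π := by
  letI : ∀ v, Fintype (M.Dom v) := M.domFin
  letI : ∀ v, Fintype (M.ExoDom v) := M.exoFin
  letI : ∀ v, Finite (M.Dom v) := fun v => Finite.of_fintype _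
  letI : ∀ v, Finite (M.ExoDom v) := fun v => Finite.of_fintype _
  have hfin : (setOf M.IsPolicy).Finite := Set.toFinite _
  have hne : (setOf M.IsPolicy).Nonempty :=
    ⟨fun _ _ => (M.domNE M.D).some, fun _ _ _ _ => rfl⟩
  obtain ⟨π, hπ, hmax⟩ := Set.exists_max_image _ M.EU hfin hne
  exact ⟨π, hπ, fun π' hπ' => hmax π' hπ'⟩

end SCIM

namespace SCIM
variable {V : Type} [Fintype V] [DecidableEq V] {M : SCIM V}

lemma doSet_not_mem {g} {S : Set V} {x : ∀ v, M.Dom v} {v : V} (h : v ∉ S) :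
    M.doSet g S x v = g v := by
  unfold SCIM.doSet; rw [if_neg h]

lemma hasICI_paths {X : V} (h : M.HasICI X) :
    Relation.ReflTransGen M.Edge M.D X ∧
      ∃ u ∈ M.Util, Relation.ReflTransGen M.Edge X u := by
  obtain ⟨pa, hpa⟩ := h
  obtain ⟨π, hopt⟩ := exists_optimal M
  obtain ⟨hpos, d, hne⟩ := hpa π hopt
  have hloc := localG_gpol hopt.1
  constructor
  · by_contra hDX
    have hX : ∀ ε, M.response π M.D d ε X = M.sol (M.gpol π) ε X := by
      intro ε
      exact sol_congr (localG_doSet hloc _ _) hloc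
        (fun v hv => doSet_not_mem (fun hm => hv (hm ▸ Relation.ReflTransGen.refl)))
        ε X hDX
    have heq : (fun ε => M.TotalU (M.nestedSol π X d ε)) =
        (fun ε => M.TotalU (M.sol (M.gpol π) ε)) := by
      funext ε
      unfold SCIM.nestedSol
      rw [hX ε]
      unfold SCIM.response
      rw [doSet_self hloc]
    rw [heq] at hne
    exact hne rfl
  · by_contra hXu
    push_neg at hXu
    have heq : (fun ε => M.TotalU (M.nestedSol π X d ε)) =
        (fun ε => M.TotalU (M.sol (M.gpol π) ε)) := by
      funext ε
      unfold SCIM.TotalU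
      refine Finset.sum_congr rfl (fun u hu => ?_)
      have hnr : ¬ Relation.ReflTransGen M.Edge X u := hXu u hu
      have : M.nestedSol π X d ε u = M.sol (M.gpol π) ε u := by
        unfold SCIM.nestedSol SCIM.response
        exact sol_congr (localG_doSet hloc _ _) hloc
          (fun v hv => doSet_not_mem (fun hm => hv (hm ▸ Relation.ReflTransGen.refl)))
          ε u hnr
      rw [this]
    rw [heq] at hne
    exact hne rfl

end SCIM

section PathLemmas
set_option linter.unusedSectionVars false
variable {V : Type} [DecidableEq V]

lemma chain_transGen {E : V → V → Prop} : ∀ {a : V} {l : List V} {b : V},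
    List.Chain E a l → b ∈ l → Relation.TransGen E a b := by
  intro a l
  induction l generalizing a with
  | nil => simp
  | cons c t ih =>
    intro b hch hb
    rcases List.chain_cons.mp hch with ⟨hac, hct⟩
    rcases List.mem_cons.mp hb with rfl | hb
    · exact .single hac
    · exact (ih hct hb).head hac

lemma chain_nodup {E : V → V → Prop} (hacy : Acyclic E) : ∀ {a : V} {l : List V},
    List.Chain E a l → (a :: l).Nodup := by
  intro a l
  induction l generalizing a with
  | nil => simp
  | cons c t ih =>
    intro hch
    rcases List.chain_cons.mp hch with ⟨hac', hct⟩
    refine List.nodup_cons.mpr ⟨?_, ih hct⟩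
    intro hmem
    rcases List.mem_cons.mp hmem with rfl | hmem
    · exact hacy a (.single hac')
    · exact hacy a ((chain_transGen hct hmem).head hac')

lemma chain_of_consec {l : List V} {a : V} (R : V → V → Prop)
    (h : ∀ pre p v post, a :: l = pre ++ p :: v :: post → R p v) : List.Chain R a l := by
  induction l generalizing a with
  | nil => exact .nil
  | cons b t ih =>
    refine List.chain_cons.mpr ⟨h [] a b t rfl, ih (fun pre p v post hd => ?_)⟩
    exact h (a :: pre) p v post (by rw [List.cons_append, ← hd])

lemma mem_of_decomp {a : V} {l pre post : List V} {p v : V}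
    (h : a :: l = pre ++ p :: v :: post) : v ∈ l := by
  cases pre with
  | nil =>
    simp only [List.nil_append, List.cons.injEq] at h
    rw [h.2]; exact List.mem_cons_self
  | cons c pre' =>
    simp only [List.cons_append, List.cons.injEq] at h
    rw [h.2]; simp

lemma reflTransGen_copy {α : Type} {f : V → α} {a b : V}
    (h : Relation.ReflTransGen (fun p v => f v = f p) a b) : f b = f a := by
  induction h with
  | refl => rfl
  | tail _ hr ih => rw [hr, ih]

/-- The path-predecessor function. -/
def prevOf : List V → V → Option V
  | a :: b :: t, v => if b = v then some a else prevOf (b :: t) v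
  | _, _ => none

lemma prevOf_mem_tail : ∀ (L : List V) (v p : V), prevOf L v = some p → v ∈ L.tail
  | [], v, p, h => by simp [prevOf] at h
  | [a], v, p, h => by simp [prevOf] at h
  | a :: b :: t, v, p, h => by
    rw [prevOf] at h
    by_cases hb : b = v
    · exact hb ▸ List.mem_cons_self
    · rw [if_neg hb] at h
      exact List.mem_cons_of_mem _ (prevOf_mem_tail (b :: t) v p h)

lemma prevOf_edge {E : V → V → Prop} : ∀ (L : List V) (v p : V),
    L.Chain' E → prevOf L v = some p → E p v
  | [], v, p, _, h => by simp [prevOf] at h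
  | [a], v, p, _, h => by simp [prevOf] at h
  | a :: b :: t, v, p, hch, h => by
    rw [prevOf] at h
    rcases List.isChain_cons_cons.mp hch with ⟨hab, hch'⟩
    by_cases hb : b = v
    · rw [if_pos hb] at h
      cases h
      exact hb ▸ hab
    · rw [if_neg hb] at h
      exact prevOf_edge (b :: t) v p hch' h

lemma prevOf_consec : ∀ (pre : List V) (L : List V) (p v : V) (post : List V),
    L = pre ++ p :: v :: post → L.Nodup → prevOf L v = some p
  | [], L, p, v, post, h, hnd => by
    subst h
    simp only [List.nil_append]
    rw [prevOf, if_pos rfl]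
  | c :: pre', L, p, v, post, h, hnd => by
    subst h
    rcases hl : pre' ++ p :: v :: post with _ | ⟨b, t⟩
    · exact absurd hl (List.append_ne_nil_of_right_ne_nil _ (List.cons_ne_nil _ _))
    · rw [List.cons_append, hl, prevOf]
      have hnd' : (b :: t).Nodup := by
        rw [← hl]
        exact (List.nodup_cons.mp (by rwa [List.cons_append, hl] at hnd)).2
      have hvt : v ∈ t := mem_of_decomp hl.symm
      rw [if_neg (fun hb => (List.nodup_cons.mp hnd').1 (by rw [hb]; exact hvt))]
      exact prevOf_consec pre' (b :: t) p v post hl.symm hnd'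

end PathLemmas

namespace SCIM
variable {V : Type} [Fintype V] [DecidableEq V] (M : SCIM V)

lemma gpol_D (π) : M.gpol π M.D = π := by
  unfold SCIM.gpol SCIM.replaceAt
  simp

lemma gpol_ne (π) {v : V} (h : v ≠ M.D) : M.gpol π v = M.f v := by
  unfold SCIM.gpol SCIM.replaceAt
  simp [h]

lemma doSet_mem {g} {S : Set V} {x : ∀ v, M.Dom v} {v : V} (h : v ∈ S) :
    M.doSet g S x v = fun _ _ => x v := by
  unfold SCIM.doSet; rw [if_pos h]

end SCIM

section Construction
set_option linter.unusedSectionVars false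
variable {V : Type} [Fintype V] [DecidableEq V]

lemma getLast_eq_of_eq {l1 l2 : List V} (h : l1 = l2) (h1 : l1 ≠ []) (h2 : l2 ≠ []) :
    l1.getLast h1 = l2.getLast h2 := by subst h; rfl

lemma chain_append_chain {E : V → V → Prop} : ∀ {a : V} {l1 : List V} {b : V} {l2 : List V},
    List.Chain E a l1 → (a :: l1).getLast (List.cons_ne_nil _ _) = b →
    List.Chain E b l2 → List.Chain E a (l1 ++ l2) := by
  intro a l1
  induction l1 generalizing a with
  | nil => intro b l2 _ h1 h2; rw [List.nil_append]; exact (show a = b from h1) ▸ h2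
  | cons c t ih =>
    intro b l2 h1 hlast h2
    rcases List.chain_cons.mp h1 with ⟨hac, hct⟩
    refine List.chain_cons.mpr ⟨hac, ih hct ?_ h2⟩
    rw [← hlast]
    exact (getLast_eq_of_eq rfl _ _).trans (List.getLast_cons (List.cons_ne_nil _ _)).symm

/-- The path model: Boolean domains, the designated path copies values along
itself, everything else is constantly `false`; utility `u` pays 1 for `true`. -/
def pathModel (E : V → V → Prop) (hac : Acyclic E) (D : V) (Util : Finset V)
    (hD : D ∉ Util) (hchild : ∀ u ∈ Util, ∀ v, ¬ E u v) (u : V) (L : List V)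
    (hch : L.Chain' E) : SCIM V where
  Edge := E
  acyclic := hac
  D := D
  Util := Util
  utilNotD := hD
  utilNoChild := hchild
  Dom := fun _ => Bool
  domFin := fun _ => inferInstance
  domNE := fun _ => inferInstance
  utilReal := fun w b => if w = u then (cond b (1:ℝ) 0) else 0
  ExoDom := fun _ => Unit
  exoFin := fun _ => inferInstance
  exoNE := fun _ => inferInstance
  f := fun v a _ => match prevOf L v with
    | some p => a p
    | none => false
  localDep := by
    intro v a a' e h
    rcases hp : prevOf L v with _ | p
    · simp [hp]
    · simp only [hp]
      exact h p (prevOf_edge L v p hch hp)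
  P := fun _ _ => 1
  Pnonneg := fun _ _ => zero_le_one
  Psum := fun v => by
    rw [Finset.sum_const, (show (Fintype.elems (α := Unit)).card = 1 from rfl)]
    simp

end Construction

section Main
set_option linter.unusedSectionVars false
set_option maxHeartbeats 1000000
variable {V : Type} [Fintype V] [DecidableEq V]
open SCIM

lemma pathModel_hasICI (E : V → V → Prop) (hac : Acyclic E) (D : V) (Util : Finset V)
    (hD : D ∉ Util) (hchild : ∀ u ∈ Util, ∀ v, ¬ E u v) (u : V) (hu : u ∈ Util)
    (l : List V) (hch' : List.Chain' E (D :: l))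
    (hlast : (D :: l).getLast (List.cons_ne_nil _ _) = u)
    (X : V) (hX : X ∈ D :: l) :
    (pathModel E hac D Util hD hchild u (D :: l) hch').HasICI X := by
  have hch : List.Chain E D l := hch'
  set L : List V := D :: l with hL
  set M : SCIM V := pathModel E hac D Util hD hchild u L hch' with hM
  have hMD : M.D = D := rfl
  have hnd : L.Nodup := chain_nodup hac hch
  have hDl : D ∉ l := (List.nodup_cons.mp hnd).1
  have hfeq : ∀ (v : V) (a : ∀ p, M.Dom p) (e : M.ExoDom v),
      M.f v a e = (match prevOf L v with | some p => a p | none => false) := fun _ _ _ => rfl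
  -- the unique exogenous setting
  have hexo : ∀ ε ε' : (∀ v, M.ExoDom v), ε = ε' := fun ε ε' => funext fun v => rfl
  obtain ⟨ε0⟩ : Nonempty (∀ v, M.ExoDom v) := ⟨fun _ => ()⟩
  have hElems : M.exoElems = ({ε0} : Finset (∀ v, M.ExoDom v)) := by
    apply Finset.eq_singleton_iff_unique_mem.mpr
    refine ⟨?_, fun x _ => hexo x _⟩
    letI : ∀ v, Fintype (M.ExoDom v) := M.exoFin
    unfold SCIM.exoElems
    exact Finset.mem_univ _
  have hsum : ∀ (F : (∀ v, M.ExoDom v) → ℝ),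
      ∑ ε ∈ M.exoElems, F ε = F ε0 := by
    intro F; rw [hElems, Finset.sum_singleton]
  have hPj : ∀ ε : (∀ v, M.ExoDom v), M.Pjoint ε = 1 := by
    intro ε; show (∏ _v : V, (1:ℝ)) = 1; simp
  have hUR : ∀ (w : V) (b : M.Dom w), M.utilReal w b = if w = u then (cond b (1:ℝ) 0) else 0 :=
    fun _ _ => rfl
  have hTU : ∀ a : (∀ v, M.Dom v), M.TotalU a = cond (a u) (1:ℝ) 0 := by
    intro a
    unfold SCIM.TotalU
    rw [Finset.sum_eq_single_of_mem u (show u ∈ M.Util from hu)]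
    · rw [hUR, if_pos rfl]
    · intro w _ hne
      rw [hUR, if_neg hne]
  -- parents of D always take value false
  have hpar : ∀ (π : _) (hπ : M.IsPolicy π) (ε : ∀ v, M.ExoDom v) (p : V), E p D →
      M.sol (M.gpol π) ε p = false := by
    intro π hπ ε p hpD
    have hpne : p ≠ D := fun h => hac D (Relation.TransGen.single (h ▸ hpD))
    have hpl : p ∉ l := fun hm => hac D ((chain_transGen hch hm).tail hpD)
    have hprev : prevOf L p = none := by
      rcases h : prevOf L p with _ | q
      · rfl
      · exact absurd (prevOf_mem_tail L p q h) hpl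
    rw [sol_solves (localG_gpol hπ) ε p, gpol_ne M π hpne, hfeq, hprev]
  -- chain propagation for the policy-completed system
  have hchainA : ∀ (π : _) (hπ : M.IsPolicy π) (ε : ∀ v, M.ExoDom v),
      M.sol (M.gpol π) ε u = M.sol (M.gpol π) ε D := by
    intro π hπ ε
    have hcons : List.Chain (fun p v : V => M.sol (M.gpol π) ε v = M.sol (M.gpol π) ε p) D l := by
      refine chain_of_consec _ (fun pre p v post hd => ?_)
      have hvl : v ∈ l := mem_of_decomp hd
      have hvD : v ≠ D := fun h => hDl (h ▸ hvl)
      have hprev : prevOf L v = some p := prevOf_consec pre L p v post hd hnd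
      rw [sol_solves (localG_gpol hπ) ε v, gpol_ne M π hvD, hfeq, hprev]
    exact reflTransGen_copy (List.relationReflTransGen_of_exists_isChain_cons l hcons hlast)
  -- everything is false under do(D := false)
  have hfalse : ∀ (π : _) (hπ : M.IsPolicy π) (ε : ∀ v, M.ExoDom v) (v : V),
      M.sol (M.doSet (M.gpol π) {M.D} (Function.update M.dflt M.D false)) ε v = false := by
    intro π hπ ε v
    induction v using WellFounded.induction (acyclic_wf hac) with
    | _ v ih =>
      rw [sol_solves (localG_doSet (localG_gpol hπ) _ _) ε v]
      by_cases hv : v = M.D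
      · rw [hv, doSet_mem M (Set.mem_singleton _)]
        exact Function.update_self _ _ _
      · rw [doSet_not_mem (S := {M.D}) (fun h => hv h), gpol_ne M π hv, hfeq]
        rcases hp : prevOf L v with _ | p
        · rfl
        · exact ih p (Relation.TransGen.single (prevOf_edge L v p hch' hp))
  -- suffix of the path from X
  obtain ⟨pre, post, hdec⟩ := List.append_of_mem hX
  have hndp : (X :: post).Nodup := List.Nodup.of_append_right (hdec ▸ hnd)
  have hXpost : X ∉ post := (List.nodup_cons.mp hndp).1
  have hLne : L ≠ [] := by rw [hL]; exact List.cons_ne_nil _ _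
  have hgl : (X :: post).getLast (List.cons_ne_nil _ _) = u := by
    have h1 : L.getLast hLne = (X :: post).getLast (List.cons_ne_nil _ _) :=
      (getLast_eq_of_eq hdec hLne
        (List.append_ne_nil_of_right_ne_nil _ (List.cons_ne_nil _ _))).trans
        (List.getLast_append_right (l := pre) (l' := X :: post) (List.cons_ne_nil _ _))
    exact h1.symm.trans hlast
  -- the downstream utility is false under do(X := false)
  have hcX : ∀ (π : _) (hπ : M.IsPolicy π) (ε : ∀ v, M.ExoDom v),
      M.sol (M.doSet (M.gpol π) {X} (Function.update M.dflt X false)) ε u = false := by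
    intro π hπ ε
    set c := M.sol (M.doSet (M.gpol π) {X} (Function.update M.dflt X false)) ε with hc
    have hcXv : c X = false := by
      rw [hc, sol_solves (localG_doSet (localG_gpol hπ) _ _) ε X,
        doSet_mem M (Set.mem_singleton _)]
      exact Function.update_self _ _ _
    have hcons : List.Chain (fun p v : V => c v = c p) X post := by
      refine chain_of_consec _ (fun pre2 p v post2 hd2 => ?_)
      have hdec2 : L = (pre ++ pre2) ++ p :: v :: post2 := by
        rw [hdec, hd2]; simp [List.append_assoc]
      have hvl : v ∈ l := mem_of_decomp (show D :: l = _ from hdec2)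
      have hvD : v ≠ D := fun h => hDl (h ▸ hvl)
      have hvX : v ≠ X := fun h => hXpost (h ▸ mem_of_decomp hd2)
      have hprev : prevOf L v = some p := prevOf_consec (pre ++ pre2) L p v post2 hdec2 hnd
      rw [hc, sol_solves (localG_doSet (localG_gpol hπ) _ _) ε v,
        doSet_not_mem (S := {X}) (fun h => hvX h), gpol_ne M π hvD, hfeq, hprev]
    have hcu := reflTransGen_copy (List.relationReflTransGen_of_exists_isChain_cons post hcons hgl)
    exact hcu.trans hcXv
  -- expected utility
  have hEU : ∀ (π : _), M.EU π = cond (M.sol (M.gpol π) ε0 u) 1 0 := by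
    intro π
    unfold SCIM.EU SCIM.EUg
    rw [hsum, hPj, one_mul, hTU]
  have hpol1 : M.IsPolicy (fun _ _ => true) := fun _ _ _ _ => rfl
  have hsol1D : M.sol (M.gpol (fun _ _ => true)) ε0 D = true := by
    show M.sol (M.gpol (fun _ _ => true)) ε0 M.D = true
    rw [sol_solves (localG_gpol hpol1) ε0 M.D]
    exact congrFun (congrFun (gpol_D M _) _) _
  have hopt_u : ∀ π, M.IsOptimal π → M.sol (M.gpol π) ε0 u = true := by
    intro π hopt
    by_contra hne
    have h1 : M.EU (fun _ _ => true) = 1 := by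
      erw [hEU, hchainA _ hpol1 ε0, hsol1D]
      rfl
    have h2 : M.EU π = 0 := by
      rw [hEU]
      rcases hb : (M.sol (M.gpol π) ε0 u : Bool) with _ | _
      · rfl
      · exact absurd hb hne
    have h3 := hopt.2 _ hpol1
    rw [h1, h2] at h3
    norm_num at h3
  -- conclusion
  refine ⟨(fun _ => false), fun π hopt => ?_⟩
  have hπ := hopt.1
  have hCtx : ∀ ε : (∀ v, M.ExoDom v), M.CtxEvent π (fun _ => false) ε :=
    fun ε p hpD => hpar π hπ ε p hpD
  have hPr : M.PrEv (M.CtxEvent π (fun _ => false)) = 1 := by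
    unfold SCIM.PrEv
    rw [hsum, if_pos (hCtx ε0), hPj]
  constructor
  · rw [hPr]; norm_num
  · refine ⟨false, ?_⟩
    have hcond : ∀ h : (∀ v, M.ExoDom v) → ℝ,
        M.condExp h (M.CtxEvent π (fun _ => false)) = h ε0 := by
      intro h
      unfold SCIM.condExp
      rw [hsum, if_pos (hCtx ε0), hPj, one_mul, hPr, div_one]
    rw [hcond, hcond, hTU, hTU]
    have h1 : M.nestedSol π X false ε0 u = false := by
      unfold SCIM.nestedSol SCIM.response
      rw [hfalse π hπ ε0 X]
      exact hcX π hπ ε0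
    rw [h1, hopt_u π hopt]
    simp
end Main


/-- instrumental control incentive criterion: a single-decision
CID (given by edges `E`, decision `D`, utility nodes `Util`) admits an instrumental
control incentive on `X` iff there is a directed path `D ⇝ X ⇝ U` through `X` to
some utility node `U`. -/
theorem ici_criterion {V : Type} [Fintype V] [DecidableEq V]
    (E : V → V → Prop) (hac : Acyclic E) (D : V) (Util : Finset V)
    (hD : D ∉ Util) (hchild : ∀ u ∈ Util, ∀ v, ¬ E u v) (X : V) :
    (∃ M : SCIM V, M.Edge = E ∧ M.D = D ∧ M.Util = Util ∧ M.HasICI X) ↔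
    (Relation.ReflTransGen E D X ∧ ∃ u ∈ Util, Relation.ReflTransGen E X u) := by
  constructor
  · rintro ⟨M, hE, hD', hU', hICI⟩
    have h := SCIM.hasICI_paths hICI
    rw [hE, hD', hU'] at h
    exact h
  · rintro ⟨hDX, u, hu, hXu⟩
    obtain ⟨l1, hch1, hl1⟩ := List.exists_isChain_cons_of_relationReflTransGen hDX
    obtain ⟨l2, hch2, hl2⟩ := List.exists_isChain_cons_of_relationReflTransGen hXu
    have hchain : List.Chain E D (l1 ++ l2) := chain_append_chain hch1 hl1 hch2
    have hch' : List.Chain' E (D :: (l1 ++ l2)) := hchain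
    have hXmem : X ∈ D :: (l1 ++ l2) := by
      have h1 : X ∈ D :: l1 := hl1 ▸ List.getLast_mem _
      rcases List.mem_cons.mp h1 with h2 | h2
      · exact h2 ▸ List.mem_cons_self
      · exact List.mem_cons_of_mem _ (List.mem_append_left _ h2)
    have hlast : (D :: (l1 ++ l2)).getLast (List.cons_ne_nil _ _) = u := by
      rcases l2 with _ | ⟨c, t⟩
      · have h1 : (D :: (l1 ++ ([] : List V))).getLast (List.cons_ne_nil _ _) =
            (D :: l1).getLast (List.cons_ne_nil _ _) :=
          getLast_eq_of_eq (by rw [List.append_nil]) _ _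
        exact h1.trans (hl1.trans (show X = u from hl2))
      · refine (getLast_eq_of_eq (show D :: (l1 ++ c :: t) = (D :: l1) ++ c :: t from rfl)
          _ (List.append_ne_nil_of_right_ne_nil _ (List.cons_ne_nil _ _))).trans ?_
        refine (List.getLast_append_right (l := D :: l1) (l' := c :: t) (List.cons_ne_nil _ _)).trans ?_
        exact (List.getLast_cons (List.cons_ne_nil c t)).symm.trans hl2
    exact ⟨pathModel E hac D Util hD hchild u (D :: (l1 ++ l2)) hch', rfl, rfl, rfl,
      pathModel_hasICI E hac D Util hD hchild u hu (l1 ++ l2) hch' hlast X hXmem⟩
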